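/- Let n, k, l be positive integers with k + l < n and l > n/2. If 𝒜 ⊆ C([n],k) and ℬ ⊆ C([n],l) are cross-intersecting and |ℬ| > C(n-1, l-1), then |𝒜|·|ℬ| < C(n-1, k-1)·C(n-1, l-1). -/

import Mathlib

open Finset Finset.Colex
open scoped FinsetFamily

attribute [-instance] instDecidableEqFin

section Part1
variable {α : Type*} [DecidableEq α]

/-- Normalized matching (easy direction) for shadows. -/
lemma matching_step (G : Finset (Finset α)) (Ω : Finset α) (r : ℕ) (hr : 1 ≤ r)
    (hG : ∀ g ∈ G, g ⊆ Ω ∧ g.card = r) :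
    G.card * r ≤ (∂ G).card * (Ω.card - r + 1) := by
  classical
  refine card_mul_le_card_mul (fun g s => s ⊆ g) ?_ ?_
  · -- each g ∈ G has at least r sets below it in ∂G
    intro g hg
    obtain ⟨hgΩ, hgr⟩ := hG g hg
    have : g.image g.erase ⊆ (∂ G).bipartiteAbove (fun g s => s ⊆ g) g := by
      intro s hs
      simp only [mem_image] at hs
      obtain ⟨x, hx, rfl⟩ := hs
      simp only [bipartiteAbove, mem_filter]
      exact ⟨mem_shadow_iff.2 ⟨g, hg, x, hx, rfl⟩, erase_subset _ _⟩
    calc r = g.card := hgr.symm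
    _ = (g.image g.erase).card := (card_image_of_injOn (erase_injOn g)).symm
    _ ≤ _ := card_le_card this
  · -- each s ∈ ∂G has at most |Ω| - r + 1 sets above it in G
    intro s hs
    obtain ⟨g₀, hg₀, x₀, hx₀, rfl⟩ := mem_shadow_iff.1 hs
    set s := g₀.erase x₀ with hsdef
    have hscard : s.card = r - 1 := by
      rw [card_erase_of_mem hx₀, (hG g₀ hg₀).2]
    have hsΩ : s ⊆ Ω := (erase_subset _ _).trans (hG g₀ hg₀).1
    have : (G.bipartiteBelow (fun g s => s ⊆ g) s).card ≤ (powersetCard 1 (Ω \ s)).card := by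
      apply card_le_card_of_injOn (fun g => g \ s)
      · intro g hg
        simp only [bipartiteBelow, mem_coe, mem_filter] at hg
        obtain ⟨hgG, hsg⟩ := hg
        rw [mem_coe, mem_powersetCard]
        refine ⟨sdiff_subset_sdiff (hG g hgG).1 le_rfl, ?_⟩
        rw [card_sdiff_of_subset hsg, (hG g hgG).2, hscard]
        omega
      · intro g₁ h₁ g₂ h₂ hgs
        simp only [bipartiteBelow, mem_coe, mem_filter] at h₁ h₂
        have e₁ : g₁ = s ∪ (g₁ \ s) := by rw [union_sdiff_of_subset h₁.2]
        have e₂ : g₂ = s ∪ (g₂ \ s) := by rw [union_sdiff_of_subset h₂.2]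
        simp only at hgs
        rw [e₁, e₂, hgs]
    rw [card_powersetCard, card_sdiff_of_subset hsΩ, hscard, Nat.choose_one_right] at this
    have hrΩ : r ≤ Ω.card := by
      have h1 := card_le_card (hG g₀ hg₀).1
      rw [(hG g₀ hg₀).2] at h1
      exact h1
    omega


lemma shadow_mem (G : Finset (Finset α)) (Ω : Finset α) (r : ℕ) (hr : 1 ≤ r)
    (hG : ∀ g ∈ G, g ⊆ Ω ∧ g.card = r) :
    ∀ s ∈ ∂ G, s ⊆ Ω ∧ s.card = r - 1 := by
  intro s hs
  obtain ⟨g, hg, x, hx, rfl⟩ := mem_shadow_iff.1 hs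
  exact ⟨(erase_subset _ _).trans (hG g hg).1,
    by rw [card_erase_of_mem hx, (hG g hg).2]⟩

lemma matching_iter (Ω : Finset α) (t : ℕ) :
    ∀ r, t ≤ r → ∀ G : Finset (Finset α), (∀ g ∈ G, g ⊆ Ω ∧ g.card = r) →
    r ≤ Ω.card →
    G.card * (Ω.card.choose (r - t)) ≤ (∂^[t] G).card * Ω.card.choose r := by
  induction t with
  | zero => intro r _ G _ _; simp
  | succ t ih =>
    intro r hrt G hG hrΩ
    have hr1 : 1 ≤ r := by omega
    have hstep := matching_step G Ω r hr1 hG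
    have hshadow := shadow_mem G Ω r hr1 hG
    have hih := ih (r-1) (by omega) (∂ G) hshadow (by omega)
    rw [Function.iterate_succ_apply]
    have hkey : Ω.card.choose r * r = Ω.card.choose (r-1) * (Ω.card - r + 1) := by
      have := Nat.choose_succ_right_eq Ω.card (r-1)
      have h2 : r - 1 + 1 = r := by omega
      rw [h2] at this
      rw [this]
      congr 1
      omega
    have hsub : r - 1 - t = r - (t+1) := by omega
    rw [hsub] at hih
    have hpos : 0 < r * Ω.card.choose (r-1) := by
      have := Nat.choose_pos (show r - 1 ≤ Ω.card by omega)
      positivity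
    refine Nat.le_of_mul_le_mul_right ?_ hpos
    calc G.card * Ω.card.choose (r - (t+1)) * (r * Ω.card.choose (r-1))
        = (G.card * r) * (Ω.card.choose (r - (t+1)) * Ω.card.choose (r-1)) := by ring
      _ ≤ ((∂ G).card * (Ω.card - r + 1)) * (Ω.card.choose (r - (t+1)) * Ω.card.choose (r-1)) := by
          exact Nat.mul_le_mul_right _ hstep
      _ = ((∂ G).card * Ω.card.choose (r - (t+1))) * (Ω.card.choose (r-1) * (Ω.card - r + 1)) := by ring
      _ ≤ ((∂^[t] (∂ G)).card * Ω.card.choose (r-1)) * (Ω.card.choose (r-1) * (Ω.card - r + 1)) := by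
          exact Nat.mul_le_mul_right _ hih
      _ = ((∂^[t] (∂ G)).card * Ω.card.choose r) * (r * Ω.card.choose (r-1)) := by
          rw [← hkey]; ring

end Part1

section Part2
variable {α : Type*} [LinearOrder α] [DecidableEq α]

lemma exists_lower_part (P : Finset (Finset α)) :
    ∀ e, e ≤ P.card → ∃ G ⊆ P, G.card = e ∧
      ∀ p ∈ P, ∀ g ∈ G, toColex p ≤ toColex g → p ∈ G := by
  intro e
  induction e with
  | zero => intro _; exact ⟨∅, empty_subset _, card_empty, by simp⟩
  | succ e ih =>
    intro he
    obtain ⟨G, hGP, hGcard, hGlow⟩ := ih (by omega)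
    have hne : (P \ G).Nonempty := by
      rw [← card_pos, card_sdiff_of_subset hGP]
      omega
    obtain ⟨g₀, hg₀, hg₀min⟩ := exists_min_image (P \ G) (fun s => toColex s) hne
    rw [mem_sdiff] at hg₀
    refine ⟨insert g₀ G, insert_subset hg₀.1 hGP, ?_, ?_⟩
    · rw [card_insert_of_notMem hg₀.2, hGcard]
    · intro p hp g hg hpg
      rcases mem_insert.1 hg with rfl | hgG
      · by_cases hpG : p ∈ G
        · exact mem_insert_of_mem hpG
        · have := hg₀min p (mem_sdiff.2 ⟨hp, hpG⟩)
          have : toColex p = toColex g := le_antisymm hpg this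
          rw [toColex_inj] at this
          subst this
          exact mem_insert_self _ _
      · exact mem_insert_of_mem (hGlow p hp g hgG hpg)

end Part2

set_option maxHeartbeats 1000000 in
lemma kk_bound (n m k e : ℕ) (hk : 1 ≤ k) (hkm : k < m) (hmn : m ≤ n - 1)
    (he : 1 ≤ e) (heD : e ≤ (n-1).choose (m-1))
    (F : Finset (Finset (Fin n))) (hF : F ⊆ powersetCard m univ)
    (hFcard : (n-1).choose m + e ≤ F.card) :
    ∃ s : ℕ, 1 ≤ s ∧ e * (n-1).choose (k-1) ≤ s * (n-1).choose (m-1) ∧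
      (n-1).choose k + s ≤ (∂^[m-k] F).card := by
  classical
  have hn : 1 ≤ n := by omega
  set z : Fin n := ⟨n-1, by omega⟩ with hz
  set Ω : Finset (Fin n) := univ.erase z with hΩdef
  have hΩcard : Ω.card = n - 1 := by
    rw [hΩdef, card_erase_of_mem (mem_univ z), card_univ, Fintype.card_fin]
  have hzΩ : z ∉ Ω := notMem_erase _ _
  have hmemΩ : ∀ s : Finset (Fin n), z ∉ s → s ⊆ Ω := by
    intro s hzs x hx
    exact mem_erase.2 ⟨fun h => hzs (h ▸ hx), mem_univ x⟩
  -- z is the top element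
  have hzlt : ∀ s t : Finset (Fin n), z ∉ s → z ∈ t → toColex s < toColex t := by
    intro s t hzs hzt
    rw [toColex_lt_toColex_iff_exists_forall_lt]
    refine ⟨z, hzt, hzs, fun b hb _ => ?_⟩
    refine lt_of_le_of_ne ?_ (ne_of_mem_of_not_mem hb hzs)
    rw [Fin.le_def]
    have := b.isLt
    simp only [hz]
    omega
  set P : Finset (Finset (Fin n)) := powersetCard (m-1) Ω with hPdef
  have hPcard : P.card = (n-1).choose (m-1) := by
    rw [hPdef, card_powersetCard, hΩcard]
  obtain ⟨G, hGP, hGcard, hGlow⟩ := exists_lower_part P e (by omega)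
  have hGmem : ∀ g ∈ G, g ⊆ Ω ∧ g.card = m - 1 := by
    intro g hg
    have := hGP hg
    rw [hPdef, mem_powersetCard] at this
    exact this
  -- the shadow quantity
  set s : ℕ := (∂^[m-k] G).card with hs
  have hGne : G.Nonempty := card_pos.1 (by omega)
  -- s ≥ 1
  have hs1 : 1 ≤ s := by
    obtain ⟨g, hg⟩ := hGne
    obtain ⟨hgΩ, hgcard⟩ := hGmem g hg
    obtain ⟨u, hug, hucard⟩ := exists_subset_card_eq (show k - 1 ≤ g.card by omega)
    have : u ∈ ∂^[m-k] G := by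
      rw [mem_shadow_iterate_iff_exists_sdiff]
      exact ⟨g, hg, hug, by rw [card_sdiff_of_subset hug, hucard, hgcard]; omega⟩
    rw [hs]
    exact card_pos.2 ⟨u, this⟩
  -- matching bound
  have hmatch : e * (n-1).choose (k-1) ≤ s * (n-1).choose (m-1) := by
    have := matching_iter Ω (m-k) (m-1) (by omega) G hGmem (by omega)
    rw [hΩcard, hGcard] at this
    have hsub : m - 1 - (m - k) = k - 1 := by omega
    rwa [hsub] at this
  -- shadow members of G
  have hshadowG : ∀ u ∈ ∂^[m-k] G, u ⊆ Ω ∧ u.card = k - 1 := by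
    intro u hu
    rw [mem_shadow_iterate_iff_exists_sdiff] at hu
    obtain ⟨g, hg, hug, hcard⟩ := hu
    obtain ⟨hgΩ, hgcard⟩ := hGmem g hg
    constructor
    · exact hug.trans hgΩ
    · have := card_sdiff_of_subset hug
      have := card_le_card hug
      omega
  -- the initial segment
  set C : Finset (Finset (Fin n)) := powersetCard m Ω ∪ G.image (insert z) with hC
  have hzG : ∀ g ∈ G, z ∉ g := fun g hg h => hzΩ ((hGmem g hg).1 h)
  have hCsized : (C : Set (Finset (Fin n))).Sized m := by
    intro A hA
    rw [mem_coe, hC, mem_union] at hA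
    rcases hA with hA | hA
    · exact (mem_powersetCard.1 hA).2
    · obtain ⟨g, hg, rfl⟩ := mem_image.1 hA
      rw [card_insert_of_notMem (hzG g hg), (hGmem g hg).2]
      omega
  have hCinit : IsInitSeg C m := by
    refine ⟨hCsized, ?_⟩
    intro A B hA ⟨hBA, hBm⟩
    rw [hC, mem_union]
    by_cases hzB : z ∈ B
    · -- A must contain z
      rw [hC, mem_union] at hA
      rcases hA with hA | hA
      · rw [mem_powersetCard] at hA
        have hzA : z ∉ A := fun h => hzΩ (hA.1 h)
        exact absurd (hzlt A B hzA hzB) (asymm hBA)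
      · obtain ⟨g, hg, rfl⟩ := mem_image.1 hA
        have hzg : z ∉ g := hzG g hg
        have hsdiff : toColex (B \ {z}) < toColex (insert z g \ {z}) := by
          rw [toColex_sdiff_lt_toColex_sdiff (singleton_subset_iff.2 hzB)
            (singleton_subset_iff.2 (mem_insert_self _ _))]
          exact hBA
        rw [← erase_eq, ← erase_eq, erase_insert hzg] at hsdiff
        have hBz : B.erase z ∈ P := by
          rw [hPdef, mem_powersetCard]
          exact ⟨hmemΩ _ (notMem_erase _ _), by rw [card_erase_of_mem hzB, hBm]⟩
        have : B.erase z ∈ G := hGlow _ hBz g hg hsdiff.le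
        right
        exact mem_image.2 ⟨B.erase z, this, insert_erase hzB⟩
    · left
      rw [mem_powersetCard]
      exact ⟨hmemΩ _ hzB, hBm⟩
  have hdisj : Disjoint (powersetCard m Ω) (G.image (insert z)) := by
    rw [disjoint_left]
    intro A hA hA'
    obtain ⟨g, hg, rfl⟩ := mem_image.1 hA'
    exact hzΩ ((mem_powersetCard.1 hA).1 (mem_insert_self _ _))
  have hinj : Set.InjOn (insert z) (G : Set (Finset (Fin n))) := by
    intro g₁ h₁ g₂ h₂ hgg
    have e₁ : (insert z g₁).erase z = g₁ := erase_insert (hzG g₁ h₁)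
    have e₂ : (insert z g₂).erase z = g₂ := erase_insert (hzG g₂ h₂)
    rw [← e₁, ← e₂, hgg]
  have hCcard : C.card = (n-1).choose m + e := by
    rw [hC, card_union_of_disjoint hdisj, card_powersetCard, hΩcard,
      card_image_of_injOn hinj, hGcard]
  -- apply iterated Kruskal-Katona
  have hFsized : (F : Set (Finset (Fin n))).Sized m := by
    intro A hA
    exact (mem_powersetCard.1 (hF hA)).2
  have hkk : (∂^[m-k] C).card ≤ (∂^[m-k] F).card :=
    iterated_kk hFsized (by omega) hCinit
  -- lower bound the shadow of C
  have hsubset : powersetCard k Ω ∪ (∂^[m-k] G).image (insert z) ⊆ ∂^[m-k] C := by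
    intro u hu
    rw [mem_union] at hu
    rw [mem_shadow_iterate_iff_exists_sdiff]
    rcases hu with hu | hu
    · rw [mem_powersetCard] at hu
      obtain ⟨v, huv, hvΩ, hvcard⟩ := exists_subsuperset_card_eq (n := m) hu.1
        (by rw [hu.2]; omega) (by rw [hΩcard]; omega)
      refine ⟨v, ?_, huv, ?_⟩
      · rw [hC, mem_union]
        left
        exact mem_powersetCard.2 ⟨hvΩ, hvcard⟩
      · rw [card_sdiff_of_subset huv, hvcard, hu.2]
    · obtain ⟨w, hw, rfl⟩ := mem_image.1 hu
      rw [mem_shadow_iterate_iff_exists_sdiff] at hw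
      obtain ⟨g, hg, hwg, hcard⟩ := hw
      have hzg : z ∉ g := hzG g hg
      have hzw : z ∉ w := fun h => hzg (hwg h)
      refine ⟨insert z g, ?_, insert_subset_insert _ hwg, ?_⟩
      · rw [hC, mem_union]
        right
        exact mem_image.2 ⟨g, hg, rfl⟩
      · rw [insert_sdiff_of_mem _ (mem_insert_self z w)]
        have : g \ insert z w = g \ w := by
          ext x
          simp only [mem_sdiff, mem_insert]
          constructor
          · rintro ⟨hx, h2⟩; exact ⟨hx, fun h => h2 (Or.inr h)⟩
          · rintro ⟨hx, h2⟩
            exact ⟨hx, fun h => by rcases h with rfl | h; exact hzg hx; exact h2 h⟩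
        rw [this, hcard]
  have hdisj2 : Disjoint (powersetCard k Ω) ((∂^[m-k] G).image (insert z)) := by
    rw [disjoint_left]
    intro u hu hu'
    obtain ⟨w, hw, rfl⟩ := mem_image.1 hu'
    exact hzΩ ((mem_powersetCard.1 hu).1 (mem_insert_self _ _))
  have hinj2 : Set.InjOn (insert z) ((∂^[m-k] G : Finset _) : Set (Finset (Fin n))) := by
    intro w₁ h₁ w₂ h₂ hww
    have hz₁ : z ∉ w₁ := fun h => hzΩ ((hshadowG w₁ h₁).1 h)
    have hz₂ : z ∉ w₂ := fun h => hzΩ ((hshadowG w₂ h₂).1 h)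
    rw [← erase_insert hz₁, ← erase_insert hz₂, hww]
  have hlower : (n-1).choose k + s ≤ (∂^[m-k] C).card := by
    calc (n-1).choose k + s
        = (powersetCard k Ω ∪ (∂^[m-k] G).image (insert z)).card := by
          rw [card_union_of_disjoint hdisj2, card_powersetCard, hΩcard,
            card_image_of_injOn hinj2]
      _ ≤ (∂^[m-k] C).card := card_le_card hsubset
  exact ⟨s, hs1, hmatch, hlower.trans hkk⟩


lemma final_arith (Cc D D' s e a : ℕ) (h1 : a + s ≤ Cc) (h2 : e * Cc ≤ s * D')
    (h3 : D' ≤ D) (hs : 1 ≤ s) (he : 1 ≤ e) (hD : 1 ≤ D) :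
    a * (D + e) < Cc * D := by
  zify
  have ha : (a : ℤ) ≤ (Cc : ℤ) - s := by omega
  have h2' : (e : ℤ) * Cc ≤ s * D' := by exact_mod_cast h2
  nlinarith [mul_le_mul_of_nonneg_right ha (show (0:ℤ) ≤ (D:ℤ) + e by positivity),
    mul_le_mul_of_nonneg_left (show (D':ℤ) ≤ D by exact_mod_cast h3) (show (0:ℤ) ≤ (s:ℤ) by positivity)]

theorem stmt_6 (n k l : ℕ) (hk : 0 < k) (hl : 0 < l) (hkl : k + l < n)
    (hl2 : n < 2 * l)
    (A B : Finset (Finset ℕ))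
    (hA : A ⊆ Finset.powersetCard k (Finset.Icc 1 n))
    (hB : B ⊆ Finset.powersetCard l (Finset.Icc 1 n))
    (hcross : ∀ a ∈ A, ∀ b ∈ B, (a ∩ b).Nonempty)
    (hBbig : Nat.choose (n-1) (l-1) < B.card) :
    A.card * B.card < Nat.choose (n-1) (k-1) * Nat.choose (n-1) (l-1) := by
  set m : ℕ := n - l with hm
  have hm2 : 2 * m < n := by omega
  have hkm : k < m := by omega
  have hn : 1 ≤ n := by omega
  -- the embedding Fin n → ℕ, x ↦ x + 1
  set f : Fin n → ℕ := fun x => (x : ℕ) + 1 with hf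
  have hfinj : Function.Injective f := by
    intro a b hab
    simp only [hf] at hab
    exact Fin.ext (by omega)
  set ψ : Finset (Fin n) → Finset ℕ := fun t => t.image f with hψ
  have hψinj : Function.Injective ψ := fun s t hst => by
    simpa [hψ] using (image_injective hfinj) hst
  have hψcard : ∀ t, (ψ t).card = t.card := fun t => card_image_of_injective _ hfinj
  have hψuniv : ψ univ = Icc 1 n := by
    ext j
    simp only [hψ, mem_image, mem_univ, true_and, mem_Icc, hf]
    constructor
    · rintro ⟨x, rfl⟩; have := x.isLt; omega
    · rintro ⟨h1, h2⟩
      exact ⟨⟨j - 1, by omega⟩, by simp; omega⟩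
  have hIcc_card : (Icc 1 n).card = n := by rw [Nat.card_Icc]; omega
  have hψsub : ∀ u : Finset ℕ, u ⊆ Icc 1 n → ∃ t : Finset (Fin n), ψ t = u := by
    intro u hu
    rw [← hψuniv] at hu
    obtain ⟨t, -, ht⟩ := subset_image_iff.1 hu
    exact ⟨t, ht⟩
  have hψss : ∀ t, ψ t ⊆ Icc 1 n := fun t => by
    rw [← hψuniv]; exact image_subset_image (subset_univ t)
  -- the family of complements of B, living in Fin n
  set F : Finset (Finset (Fin n)) :=
    (powersetCard m univ).filter (fun t => Icc 1 n \ ψ t ∈ B) with hF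
  have hFcard : F.card = B.card := by
    apply card_bij (fun t _ => Icc 1 n \ ψ t)
    · intro t ht
      exact (mem_filter.1 ht).2
    · intro t₁ h₁ t₂ h₂ h12
      apply hψinj
      have c₁ : ψ t₁ ⊆ Icc 1 n := hψss t₁
      have c₂ : ψ t₂ ⊆ Icc 1 n := hψss t₂
      have := congrArg (Icc 1 n \ ·) h12
      simpa [sdiff_sdiff_right_self, inf_eq_inter, inter_eq_right.2 c₁,
        inter_eq_right.2 c₂] using this
    · intro b hb
      have hbIcc : b ⊆ Icc 1 n := (mem_powersetCard.1 (hB hb)).1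
      have hbcard : b.card = l := (mem_powersetCard.1 (hB hb)).2
      obtain ⟨t, ht⟩ := hψsub (Icc 1 n \ b) sdiff_subset
      have htmem : t ∈ F := by
        rw [hF, mem_filter, mem_powersetCard]
        have h1 : (ψ t).card = n - l := by
          rw [ht, card_sdiff_of_subset hbIcc, hIcc_card, hbcard]
        have h2 : Icc 1 n \ ψ t = b := by
          rw [ht, sdiff_sdiff_right_self, inf_eq_inter, inter_eq_right.2 hbIcc]
        exact ⟨⟨subset_univ t, by rw [← hψcard t, h1]⟩, by rw [h2]; exact hb⟩
      refine ⟨t, htmem, ?_⟩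
      rw [ht, sdiff_sdiff_right_self, inf_eq_inter, inter_eq_right.2 hbIcc]
  -- choose symmetry
  have hDsymm : (n-1).choose (l-1) = (n-1).choose m := by
    have : m = (n-1) - (l-1) := by omega
    rw [this, Nat.choose_symm (by omega)]
  -- e
  set e : ℕ := B.card - (n-1).choose m with he
  have he1 : 1 ≤ e := by rw [he, ← hDsymm]; omega
  have heB : B.card = (n-1).choose m + e := by rw [he, ← hDsymm]; omega
  have hFub : F.card ≤ n.choose m := by
    calc F.card ≤ (powersetCard m (univ : Finset (Fin n))).card := card_le_card (filter_subset _ _)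
      _ = n.choose m := by rw [card_powersetCard, card_univ, Fintype.card_fin]
  have hpascal : n.choose m = (n-1).choose (m-1) + (n-1).choose m := by
    have h1 : n = (n-1) + 1 := by omega
    have h2 : m = (m-1) + 1 := by omega
    rw [h1, h2, Nat.choose_succ_succ]
    simp
  have heD : e ≤ (n-1).choose (m-1) := by
    rw [hFcard] at hFub
    omega
  -- apply the Kruskal-Katona bound
  obtain ⟨s, hs1, hmatch, hshadow⟩ := kk_bound n m k e (by omega) hkm (by omega) he1 heD F
    (filter_subset _ _) (by rw [hFcard, heB])
  -- the family A in Fin n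
  set A' : Finset (Finset (Fin n)) :=
    (powersetCard k univ).filter (fun t => ψ t ∈ A) with hA'
  have hAcard : A'.card = A.card := by
    apply card_bij (fun t _ => ψ t)
    · intro t ht; exact (mem_filter.1 ht).2
    · intro t₁ _ t₂ _ h12; exact hψinj h12
    · intro a ha
      have haIcc : a ⊆ Icc 1 n := (mem_powersetCard.1 (hA ha)).1
      have hacard : a.card = k := (mem_powersetCard.1 (hA ha)).2
      obtain ⟨t, ht⟩ := hψsub a haIcc
      refine ⟨t, ?_, ht⟩
      rw [hA', mem_filter, mem_powersetCard]
      exact ⟨⟨subset_univ t, by rw [← hψcard t, ht, hacard]⟩, by rw [ht]; exact ha⟩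
  -- disjointness of A' and the iterated shadow of F
  have hFsized : (F : Set (Finset (Fin n))).Sized m := fun t ht =>
    (mem_powersetCard.1 (mem_of_mem_filter _ ht)).2
  have hshsub : ∂^[m-k] F ⊆ powersetCard k (univ : Finset (Fin n)) := by
    intro u hu
    rw [mem_powersetCard]
    refine ⟨subset_univ u, ?_⟩
    have := hFsized.shadow_iterate (k := m - k) hu
    simpa [show m - (m - k) = k by omega] using this
  have hdisj : Disjoint A' (∂^[m-k] F) := by
    rw [disjoint_left]
    intro u huA huS
    rw [mem_shadow_iterate_iff_exists_sdiff] at huS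
    obtain ⟨c, hc, huc, -⟩ := huS
    rw [hF, mem_filter] at hc
    have hbB : Icc 1 n \ ψ c ∈ B := hc.2
    have huA2 : ψ u ∈ A := (mem_filter.1 huA).2
    have := hcross (ψ u) huA2 (Icc 1 n \ ψ c) hbB
    obtain ⟨x, hx⟩ := this
    rw [mem_inter, mem_sdiff] at hx
    exact hx.2.2 (image_subset_image huc hx.1)
  have hsum : A'.card + (∂^[m-k] F).card ≤ n.choose k := by
    rw [← card_union_of_disjoint hdisj]
    calc (A' ∪ ∂^[m-k] F).card ≤ (powersetCard k (univ : Finset (Fin n))).card := by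
          apply card_le_card
          exact union_subset (filter_subset _ _) hshsub
      _ = n.choose k := by rw [card_powersetCard, card_univ, Fintype.card_fin]
  have hpascal2 : n.choose k = (n-1).choose (k-1) + (n-1).choose k := by
    have h1 : n = (n-1) + 1 := by omega
    have h2 : k = (k-1) + 1 := by omega
    rw [h1, h2, Nat.choose_succ_succ]
    simp
  have hAub : A.card + s ≤ (n-1).choose (k-1) := by
    rw [← hAcard]
    omega
  -- D' ≤ D
  have hDD : (n-1).choose (m-1) ≤ (n-1).choose m := by
    have h2 : m - 1 < (n-1)/2 := by omega
    have := Nat.choose_le_succ_of_lt_half_left h2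
    have h3 : m - 1 + 1 = m := by omega
    rwa [h3] at this
  have hDpos : 1 ≤ (n-1).choose m := Nat.choose_pos (by omega)
  rw [hDsymm, heB]
  exact final_arith ((n-1).choose (k-1)) ((n-1).choose m) ((n-1).choose (m-1)) s e A.card
    hAub (by linarith [hmatch, Nat.mul_comm e ((n-1).choose (k-1))]) hDD hs1 he1 hDpos
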